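/- The poset of waning functions ordered by f ⪯ g iff f(i) ≥ g(i) for all i ∈ ω+1 has no infinite strictly ascending chain. -/

import Mathlib

open Set Classical

noncomputable section

/-- A partial injection (partial bijection) on ℕ, viewed as a set of pairs. -/
def IsPInj (g : Set (ℕ × ℕ)) : Prop :=
  ∀ ⦃a b c d : ℕ⦄, (a, b) ∈ g → (c, d) ∈ g → (a = c ↔ b = d)

/-- Domain of a partial injection. -/
def pdom (g : Set (ℕ × ℕ)) : Set ℕ := {x | ∃ y, (x, y) ∈ g}

/-- Image of a partial injection. -/
def pim (g : Set (ℕ × ℕ)) : Set ℕ := {y | ∃ x, (x, y) ∈ g}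

/-- Restriction of a partial injection to `{0, …, r-1}`. -/
def pres (g : Set (ℕ × ℕ)) (r : ℕ) : Set (ℕ × ℕ) := {p ∈ g | p.1 < r}

/-- A waning function `f : ω + 1 → ω + 1`. -/
def Waning (f : ℕ∞ → ℕ∞) : Prop :=
  Antitone f ∧
    ((∀ i, f i = ⊤) ∨
      ((∃ i : ℕ, f i ≠ ⊤) ∧
        ∀ j : ℕ, f j ≠ 0 → f j ≠ ⊤ → f ((j + 1 : ℕ)) < f j))

/-- A waning function with a finite value `m` at `a` vanishes at `a + m`. -/
lemma waning_eventually_zero (f : ℕ∞ → ℕ∞) (hf : Waning f) (a : ℕ) (ha : f a ≠ ⊤) :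
    f ((a + (f a).toNat : ℕ) : ℕ∞) = 0 := by
  obtain ⟨hmono, h | ⟨_, hstep⟩⟩ := hf
  · exact absurd (h a) ha
  set m := (f a).toNat with hm
  have hfa : f a = (m : ℕ∞) := (ENat.coe_toNat ha).symm
  have key : ∀ j : ℕ, f ((a + j : ℕ) : ℕ∞) + j ≤ m ∨ f ((a + j : ℕ) : ℕ∞) = 0 := by
    intro j
    induction j with
    | zero => left; simpa using hfa.le
    | succ j ih =>
      rcases ih with h | h
      · by_cases hz : f ((a + j : ℕ) : ℕ∞) = 0
        · right
          have := hmono (show ((a + j : ℕ) : ℕ∞) ≤ ((a + (j+1) : ℕ) : ℕ∞) by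
            exact_mod_cast Nat.le_succ_of_le (le_refl _))
          exact le_antisymm (hz ▸ this) zero_le
        · have hnt : f ((a + j : ℕ) : ℕ∞) ≠ ⊤ := by
            intro ht; rw [ht] at h; simp at h
          have hlt := hstep (a + j) hz hnt
          left
          have h1 : f ((a + j + 1 : ℕ) : ℕ∞) + 1 ≤ f ((a + j : ℕ) : ℕ∞) :=
            Order.add_one_le_of_lt hlt
          calc f ((a + (j+1) : ℕ) : ℕ∞) + (j+1 : ℕ)
              = f ((a + j + 1 : ℕ) : ℕ∞) + 1 + j := by
                push_cast; ring_nf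
            _ ≤ f ((a + j : ℕ) : ℕ∞) + j := by
                exact add_le_add_left h1 _
            _ ≤ (m : ℕ∞) := h
      · right
        have := hmono (show ((a + j : ℕ) : ℕ∞) ≤ ((a + (j+1) : ℕ) : ℕ∞) by
          exact_mod_cast Nat.le_succ_of_le (le_refl _))
        exact le_antisymm (h ▸ this) zero_le
  rcases key m with h | h
  · have : f ((a + m : ℕ) : ℕ∞) + m ≤ 0 + m := by simpa using h
    have h0 : f ((a + m : ℕ) : ℕ∞) ≤ 0 := (WithTop.add_le_add_iff_right (by simp : (m:ℕ∞) ≠ ⊤)).mp this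
    exact le_antisymm h0 zero_le
  · exact h

/-- The poset of waning functions ordered by `f ⪯ g ↔ ∀ i, f(i) ≥ g(i)` has no infinite
strictly ascending chain. -/
theorem no_infinite_ascending_chain :
    ¬ ∃ F : ℕ → (ℕ∞ → ℕ∞),
        (∀ k, Waning (F k)) ∧
        ∀ k, (∀ i, F (k + 1) i ≤ F k i) ∧ F k ≠ F (k + 1) := by
  rintro ⟨F, hW, hchain⟩
  -- the chain is pointwise non-increasing
  have hle : ∀ k d i, F (k + d) i ≤ F k i := by
    intro k d i
    induction d with
    | zero => exact le_rfl
    | succ d ih => exact le_trans ((hchain (k + d)).1 i) ih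
  have hle' : ∀ k l, l ≤ k → ∀ i, F k i ≤ F l i := by
    intro k l hlk i
    obtain ⟨d, rfl⟩ := Nat.exists_eq_add_of_le hlk
    exact hle l d i
  -- F 1 is not constantly ⊤
  have h1 : ¬ ∀ i, F 1 i = ⊤ := by
    intro h
    apply (hchain 0).2
    funext i
    have h1i : F 1 i = ⊤ := h i
    have : F 0 i = ⊤ := top_le_iff.mp (h1i ▸ (hchain 0).1 i)
    rw [this, h1i]
  obtain ⟨hmono1, hc⟩ := hW 1
  rcases hc with hc | ⟨⟨a, ha⟩, _⟩
  · exact h1 hc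
  -- the window
  set m := (F 1 (a : ℕ∞)).toNat with hm
  have hzero1 : F 1 ((a + m : ℕ) : ℕ∞) = 0 := waning_eventually_zero (F 1) (hW 1) a ha
  have hzero : ∀ k, 1 ≤ k → ∀ i : ℕ∞, ((a + m : ℕ) : ℕ∞) ≤ i → F k i = 0 := by
    intro k hk i hi
    have h2 : F 1 i ≤ F 1 ((a + m : ℕ) : ℕ∞) := hmono1 hi
    have h3 : F k i ≤ F 1 i := hle' k 1 hk i
    exact le_antisymm (by rw [hzero1] at h2; exact le_trans h3 h2) zero_le
  set N := a + m + 1 with hN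
  -- the descending sequence in a finite product
  set G : ℕ → (Fin N → ℕ∞) := fun k i => F (1 + k) ((i : ℕ) : ℕ∞) with hG
  have hstep : ∀ k, G (k + 1) < G k := by
    intro k
    have hlek : G (k + 1) ≤ G k := by
      intro i
      have : (1 + (k + 1)) = (1 + k) + 1 := by ring
      rw [hG]; simp only []
      rw [this]
      exact (hchain (1 + k)).1 _
    refine lt_of_le_of_ne hlek ?_
    intro heq
    apply (hchain (1 + k)).2
    funext i
    have hk1 : (1 : ℕ) ≤ 1 + k := Nat.le_add_right 1 k
    have hk2 : (1 : ℕ) ≤ 1 + k + 1 := Nat.le_add_right 1 (k + 1)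
    cases i with
    | top =>
      rw [hzero _ hk1 ⊤ le_top, hzero _ hk2 ⊤ le_top]
    | coe n =>
      by_cases hn : n < N
      · have := congrFun heq ⟨n, hn⟩
        simp only [hG] at this
        have h' : (1 + (k + 1)) = (1 + k) + 1 := by ring
        rw [h'] at this
        exact this.symm
      · push_neg at hn
        have hnm : ((a + m : ℕ) : ℕ∞) ≤ (n : ℕ∞) := by
          exact_mod_cast le_trans (Nat.le_succ _) hn
        rw [hzero _ hk1 _ hnm, hzero _ hk2 _ hnm]
  exact RelEmbedding.not_wellFounded
    (RelEmbedding.natGT G hstep) (wellFounded_lt)
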